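/- Let J, R be n×n complex matrices with J skew-Hermitian and R Hermitian positive semi-definite. If no eigenvector of J lies in the kernel of R, then rank [λI - J, R] = n for every λ ∈ ℂ. -/

import Mathlib

open Matrix
open scoped ComplexOrder

/-- If no eigenvector of `J` lies in the kernel of `R`, then
`rank [λI - J, R] = n` for every `λ ∈ ℂ`. -/
theorem stmt_4 (n : ℕ) (J R : Matrix (Fin n) (Fin n) ℂ)
    (hJ : Jᴴ = -J) (hR : R.PosSemidef)
    (h : ∀ (lam : ℂ) (v : Fin n → ℂ), v ≠ 0 → J *ᵥ v = lam • v → R *ᵥ v ≠ 0) :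
    ∀ lam : ℂ, (Matrix.fromCols (lam • (1 : Matrix (Fin n) (Fin n) ℂ) - J) R).rank = n := by
  intro lam
  set A := lam • (1 : Matrix (Fin n) (Fin n) ℂ) - J with hA
  rw [← Matrix.rank_conjTranspose, conjTranspose_fromCols_eq_fromRows_conjTranspose]
  set B := fromRows Aᴴ Rᴴ with hB
  have hker : LinearMap.ker B.mulVecLin = ⊥ := by
    rw [LinearMap.ker_eq_bot']
    intro v hv
    by_contra hv0
    rw [Matrix.mulVecLin_apply, hB, fromRows_mulVec] at hv
    have h1 : Aᴴ *ᵥ v = 0 := funext fun i => congrFun hv (Sum.inl i)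
    have h2 : Rᴴ *ᵥ v = 0 := funext fun i => congrFun hv (Sum.inr i)
    have hAH : Aᴴ = (star lam) • (1 : Matrix (Fin n) (Fin n) ℂ) + J := by
      rw [hA, conjTranspose_sub, hJ, conjTranspose_smul, conjTranspose_one, sub_neg_eq_add]
    rw [hAH, add_mulVec, smul_mulVec, one_mulVec] at h1
    have hJv : J *ᵥ v = (-(star lam)) • v := by
      have := eq_neg_of_add_eq_zero_right h1
      rw [this, neg_smul]
    have hRv : R *ᵥ v = 0 := by rwa [hR.isHermitian.eq] at h2
    exact h _ v hv0 hJv hRv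
  have := LinearMap.finrank_range_add_finrank_ker B.mulVecLin
  rw [hker, finrank_bot, add_zero] at this
  rw [Matrix.rank, this]
  simp
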